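/- Let a, c, u ∈ ℂ with c not a nonpositive integer and u ≠ 1/2, and set δ := (1/2)(a − c + 1/2)(a − 1/2). Then for every complex x with |x| < 1: x(1−x)·∂ₓF(a+u, a−u; c; x) + ((1/2 − a)x + (1/2)c − 1/2 + (u − 1/2)(x − 1/2) + δ/(u − 1/2))·F(a+u, a−u; c; x) = ((a−u)(a−c+u)/(2(u − 1/2)))·F(a+u−1, a−u+1; c; x). -/

import Mathlib

set_option maxHeartbeats 1000000

open Filter Topology Polynomial Finset

/-- The Gauss hypergeometric series F(a,b;c;x) = ∑ (a)ₖ(b)ₖ/((c)ₖ k!) xᵏ. -/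
noncomputable def gauss2F1 (a b c x : ℂ) : ℂ :=
  ∑' k : ℕ, ((ascPochhammer ℂ k).eval a * (ascPochhammer ℂ k).eval b)
    / ((ascPochhammer ℂ k).eval c * (Nat.factorial k : ℂ)) * x ^ k

namespace Gauss16

noncomputable def gcoeff (a b c : ℂ) (k : ℕ) : ℂ :=
  ((ascPochhammer ℂ k).eval a * (ascPochhammer ℂ k).eval b)
    / ((ascPochhammer ℂ k).eval c * (Nat.factorial k : ℂ))

lemma gauss_eq (a b c x : ℂ) : gauss2F1 a b c x = ∑' k, gcoeff a b c k * x ^ k := rfl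

lemma poch_ne_zero {c : ℂ} (hc : ∀ n : ℕ, c ≠ -(n : ℂ)) (k : ℕ) :
    (ascPochhammer ℂ k).eval c ≠ 0 := by
  induction k with
  | zero => simp
  | succ n ih =>
    rw [ascPochhammer_succ_eval]
    refine mul_ne_zero ih fun h => hc n ?_
    rwa [add_eq_zero_iff_eq_neg] at h

lemma asc_succ_left_eval (z : ℂ) (n : ℕ) :
    (ascPochhammer ℂ (n + 1)).eval z = z * (ascPochhammer ℂ n).eval (z + 1) := by
  rw [ascPochhammer_succ_left]
  simp [eval_comp]

lemma gcoeff_succ (a b c : ℂ) (k : ℕ) :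
    gcoeff a b c (k + 1)
      = gcoeff a b c k * ((a + k) * (b + k) / ((c + k) * ((k : ℂ) + 1))) := by
  unfold gcoeff
  rw [ascPochhammer_succ_eval, ascPochhammer_succ_eval, ascPochhammer_succ_eval,
    Nat.factorial_succ, div_mul_div_comm]
  push_cast
  congr 1 <;> ring

lemma tendsto_frac (z w : ℂ) :
    Tendsto (fun k : ℕ => (z + k) / (w + k)) atTop (𝓝 1) := by
  have hnorm : Tendsto (fun k : ℕ => ‖w + (k : ℂ)‖) atTop atTop := by
    apply tendsto_atTop_mono (f := fun k : ℕ => (k : ℝ) - ‖w‖)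
    · intro k
      have h := norm_add_le (w + (k : ℂ)) (-w)
      rw [show w + (k : ℂ) + -w = (k : ℂ) from by ring, norm_neg] at h
      have hk : ‖(k : ℂ)‖ = (k : ℝ) := by simp
      rw [hk] at h
      linarith
    · exact tendsto_atTop_add_const_right _ _ tendsto_natCast_atTop_atTop
  have h0 : Tendsto (fun k : ℕ => (z - w) / (w + k)) atTop (𝓝 0) := by
    rw [tendsto_zero_iff_norm_tendsto_zero]
    simp only [norm_div]
    exact Tendsto.div_atTop tendsto_const_nhds hnorm
  have h1 : Tendsto (fun k : ℕ => 1 + (z - w) / (w + k)) atTop (𝓝 1) := by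
    simpa using tendsto_const_nhds.add h0
  apply h1.congr'
  filter_upwards [hnorm.eventually_gt_atTop 0] with k hk
  have hne : w + (k : ℂ) ≠ 0 := by
    intro h; rw [h] at hk; simp at hk
  field_simp
  ring

lemma tendsto_norm_ratio (a b c : ℂ) :
    Tendsto (fun k : ℕ => ‖(a + k) * (b + k) / ((c + k) * ((k : ℂ) + 1))‖)
      atTop (𝓝 1) := by
  have h := ((tendsto_frac a c).mul (tendsto_frac b 1)).norm
  simp only [mul_one, norm_one] at h
  apply h.congr
  intro k
  congr 1
  rw [div_mul_div_comm]
  ring_nf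

lemma summable_of_ratio {E : Type*} [SeminormedAddCommGroup E] [CompleteSpace E] {A : ℕ → E} {m : ℕ → ℝ} {L : ℝ}
    (h : ∀ᶠ k in atTop, ‖A (k + 1)‖ ≤ m k * ‖A k‖)
    (hm : Tendsto m atTop (𝓝 L)) (hL : L < 1) : Summable A := by
  have hr : L < (L + 1) / 2 := by linarith
  apply summable_of_ratio_norm_eventually_le (r := (L + 1) / 2) (by linarith)
  filter_upwards [h, hm.eventually_le_const hr] with k h1 h2
  calc ‖A (k + 1)‖ ≤ m k * ‖A k‖ := h1
    _ ≤ (L + 1) / 2 * ‖A k‖ := mul_le_mul_of_nonneg_right h2 (norm_nonneg _)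

lemma summable_series (a b c : ℂ) {x : ℂ} (hx : ‖x‖ < 1) :
    Summable (fun k => gcoeff a b c k * x ^ k) := by
  refine summable_of_ratio (L := ‖x‖) (m := fun k =>
      ‖(a + k) * (b + k) / ((c + k) * ((k : ℂ) + 1))‖ * ‖x‖) ?_ ?_ ?_
  · filter_upwards with k
    refine le_of_eq ?_
    have e1 : gcoeff a b c (k + 1) * x ^ (k + 1)
        = (gcoeff a b c k * x ^ k) * ((a + k) * (b + k) / ((c + k) * ((k : ℂ) + 1)) * x) := by
      rw [gcoeff_succ, pow_succ]; ring
    rw [e1]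
    simp only [norm_mul]
    ring
  · simpa using (tendsto_norm_ratio a b c).mul_const ‖x‖
  · simpa using hx

lemma tendsto_succ_div : Tendsto (fun k : ℕ => ((k : ℝ) + 1) / k) atTop (𝓝 1) := by
  have h0 : Tendsto (fun k : ℕ => 1 + 1 / (k : ℝ)) atTop (𝓝 1) := by
    simpa using tendsto_const_nhds.add (tendsto_one_div_atTop_nhds_zero_nat : Tendsto (fun n : ℕ => 1 / (n : ℝ)) atTop (𝓝 0))
  apply h0.congr'
  filter_upwards [eventually_ge_atTop 1] with k hk
  have : (k : ℝ) ≠ 0 := by positivity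
  field_simp

lemma aux_ratio_calc (J G Rn P r : ℝ) (hJ : J ≠ 0) :
    (J + 1) * (G * Rn) * (P * r) = (J + 1) / J * Rn * r * (J * G * P) := by
  field_simp

lemma summable_deriv_bound (a b c : ℂ) {ρ : ℝ} (hρ0 : 0 < ρ) (hρ : ρ < 1) :
    Summable (fun k : ℕ => (k : ℝ) * ‖gcoeff a b c k‖ * ρ ^ (k - 1)) := by
  refine summable_of_ratio (L := ρ) (m := fun k =>
      ((k : ℝ) + 1) / k * ‖(a + k) * (b + k) / ((c + k) * ((k : ℂ) + 1))‖ * ρ) ?_ ?_ ?_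
  · filter_upwards [eventually_ge_atTop 1] with k hk
    obtain ⟨j, rfl⟩ : ∃ j, k = j + 1 := ⟨k - 1, by omega⟩
    refine le_of_eq ?_
    rw [Real.norm_of_nonneg (by positivity), Real.norm_of_nonneg (by positivity)]
    rw [show (j + 1 + 1 : ℕ) - 1 = j + 1 from rfl, show (j + 1 : ℕ) - 1 = j from rfl,
      gcoeff_succ, norm_mul, pow_succ]
    have hj : ((j : ℝ) + 1) ≠ 0 := by positivity
    push_cast
    exact aux_ratio_calc _ _ _ _ _ hj
  · have := (tendsto_succ_div.mul (tendsto_norm_ratio a b c)).mul_const ρ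
    simpa using this
  · simpa using hρ

lemma summable_deriv_series (a b c : ℂ) {x : ℂ} (hx : ‖x‖ < 1) :
    Summable (fun k : ℕ => gcoeff a b c k * ((k : ℂ) * x ^ (k - 1))) := by
  set ρ : ℝ := (‖x‖ + 1) / 2 with hρdef
  have hρ0 : 0 < ρ := by positivity
  have hρ1 : ρ < 1 := by rw [hρdef]; linarith
  have hxρ : ‖x‖ ≤ ρ := by rw [hρdef]; linarith
  refine Summable.of_norm_bounded (summable_deriv_bound a b c hρ0 hρ1) fun k => ?_
  show _ ≤ (k : ℝ) * ‖gcoeff a b c k‖ * ρ ^ (k - 1)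
  rw [norm_mul, norm_mul, norm_pow, Complex.norm_natCast]
  rw [show (k : ℝ) * ‖gcoeff a b c k‖ * ρ ^ (k - 1)
      = ‖gcoeff a b c k‖ * ((k : ℝ) * ρ ^ (k - 1)) from by ring]
  gcongr

lemma hasDerivAt_gauss (a b c : ℂ) {x : ℂ} (hx : ‖x‖ < 1) :
    HasDerivAt (fun y => gauss2F1 a b c y)
      (∑' k : ℕ, gcoeff a b c k * ((k : ℂ) * x ^ (k - 1))) x := by
  set ρ : ℝ := (‖x‖ + 1) / 2 with hρdef
  have hρ0 : 0 < ρ := by positivity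
  have hρ1 : ρ < 1 := by rw [hρdef]; linarith
  have hxρ : ‖x‖ < ρ := by rw [hρdef]; linarith
  have heq : (fun y => gauss2F1 a b c y) = fun y => ∑' k : ℕ, gcoeff a b c k * y ^ k :=
    funext fun y => gauss_eq a b c y
  rw [heq]
  refine hasDerivAt_tsum_of_isPreconnected
    (u := fun k : ℕ => (k : ℝ) * ‖gcoeff a b c k‖ * ρ ^ (k - 1))
    (t := Metric.ball (0 : ℂ) ρ) (y₀ := (0 : ℂ))
    (summable_deriv_bound a b c hρ0 hρ1) Metric.isOpen_ball
    (convex_ball _ _).isPreconnected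
    (fun k y _ => (hasDerivAt_pow k y).const_mul (gcoeff a b c k)) ?_ ?_ ?_ ?_
  · intro k y hy
    have hyρ : ‖y‖ ≤ ρ := by
      rw [Metric.mem_ball, dist_zero_right] at hy
      exact hy.le
    show _ ≤ (k : ℝ) * ‖gcoeff a b c k‖ * ρ ^ (k - 1)
    rw [norm_mul, norm_mul, norm_pow, Complex.norm_natCast]
    rw [show (k : ℝ) * ‖gcoeff a b c k‖ * ρ ^ (k - 1)
        = ‖gcoeff a b c k‖ * ((k : ℝ) * ρ ^ (k - 1)) from by ring]
    gcongr
  · simpa [Metric.mem_ball, dist_zero_right] using hρ0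
  · refine summable_of_ne_finset_zero (s := {0}) fun k hk => ?_
    have : k ≠ 0 := by simpa using hk
    simp [zero_pow this]
  · rw [Metric.mem_ball, dist_zero_right]; exact hxρ

lemma key_alg (P Q C F k' a c u : ℂ) (hC : C ≠ 0) (hck : c + k' ≠ 0) (hF : F ≠ 0)
    (hk1 : k' + 1 ≠ 0) (hu' : u - 1/2 ≠ 0) (hau : a - u ≠ 0) :
    (k' + 1 + (1/2 * c - 1/2 - (u - 1/2) * (1/2) + (1/2 * (a - c + 1/2) * (a - 1/2)) / (u - 1/2)))
        * (P * (a + u + k') * (Q * (a - u + k')) / (C * (c + k') * ((k' + 1) * F)))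
      + ((u - a) - k') * (P * Q / (C * F))
    = (a - u) * (a - c + u) / (2 * (u - 1/2))
        * ((a + u - 1) * P * (Q * (a - u + k') * (a - u + (k' + 1)) / (a - u))
            / (C * (c + k') * ((k' + 1) * F))) := by
  have h2u : (2 : ℂ) * (u - 1/2) ≠ 0 := mul_ne_zero two_ne_zero hu'
  have hT : k' + 1 + (1/2 * c - 1/2 - (u - 1/2) * (1/2)
        + (1/2 * (a - c + 1/2) * (a - 1/2)) / (u - 1/2))
      = (2 * (k' + 1) * (u - 1/2) + (c - 1) * (u - 1/2) - (u - 1/2) ^ 2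
          + (a - c + 1/2) * (a - 1/2)) / (2 * (u - 1/2)) := by
    rw [eq_div_iff h2u]
    linear_combination 2 * (div_mul_cancel₀ (1/2 * (a - c + 1/2) * (a - 1/2)) hu')
  rw [hT]
  rw [show ((u - a) - k') * (P * Q / (C * F)) = ((u - a) - k') * (P * Q) / (C * F) from
    (mul_div_assoc _ _ _).symm]
  rw [show (a + u - 1) * P * (Q * (a - u + k') * (a - u + (k' + 1)) / (a - u))
      = (a + u - 1) * P * (Q * (a - u + k') * (a - u + (k' + 1))) / (a - u) from
    (mul_div_assoc _ _ _).symm]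
  rw [div_div, div_mul_div_comm, div_mul_div_comm]
  rw [div_add_div _ _ (by apply_rules [mul_ne_zero, two_ne_zero])
      (by apply_rules [mul_ne_zero, two_ne_zero]),
    div_eq_div_iff (by apply_rules [mul_ne_zero, two_ne_zero])
      (by apply_rules [mul_ne_zero, two_ne_zero])]
  ring

/-- The key coefficient identity. -/
lemma key (a c u δ : ℂ) (hc : ∀ n : ℕ, c ≠ -(n : ℂ)) (hu' : u - 1/2 ≠ 0)
    (hδ : δ = (1/2) * (a - c + 1/2) * (a - 1/2)) (k : ℕ) :
    ((k : ℂ) + 1 + ((1/2) * c - 1/2 - (u - 1/2) * (1/2) + δ / (u - 1/2)))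
        * gcoeff (a + u) (a - u) c (k + 1)
      + ((u - a) - k) * gcoeff (a + u) (a - u) c k
    = ((a - u) * (a - c + u) / (2 * (u - 1/2))) * gcoeff (a + u - 1) (a - u + 1) c (k + 1) := by
  subst hδ
  by_cases hau : a - u = 0
  · have hau' : u - a = 0 := by linear_combination -hau
    rw [hau]
    unfold gcoeff
    rw [show (ascPochhammer ℂ (k+1)).eval (0 : ℂ) = 0 from by
      simp [ascPochhammer_eval_zero]]
    cases k with
    | zero => simp [hau']
    | succ j =>
      rw [show (ascPochhammer ℂ (j+1)).eval (0 : ℂ) = 0 from by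
        simp [ascPochhammer_eval_zero]]
      simp
  · have hC := poch_ne_zero hc k
    have hck : c + (k : ℂ) ≠ 0 := fun h => hc k (by rwa [add_eq_zero_iff_eq_neg] at h)
    have hfac : ((k.factorial : ℂ)) ≠ 0 := Nat.cast_ne_zero.mpr k.factorial_ne_zero
    have hk1 : ((k : ℂ) + 1) ≠ 0 := by
      intro h
      have : ((k + 1 : ℕ) : ℂ) = 0 := by push_cast; linear_combination h
      exact Nat.cast_ne_zero.mpr (Nat.succ_ne_zero k) this
    have hq1 : (ascPochhammer ℂ (k + 1)).eval (a - u + 1)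
        = (ascPochhammer ℂ k).eval (a - u) * ((a - u) + k) * ((a - u) + (k + 1)) / (a - u) := by
      rw [eq_div_iff hau]
      have h1 : (a - u) * (ascPochhammer ℂ (k + 1)).eval ((a - u) + 1)
          = (ascPochhammer ℂ (k + 2)).eval (a - u) := (asc_succ_left_eval (a - u) (k + 1)).symm
      have h2 : (ascPochhammer ℂ (k + 2)).eval (a - u)
          = (ascPochhammer ℂ k).eval (a - u) * ((a - u) + k) * ((a - u) + (k + 1)) := by
        rw [show k + 2 = (k + 1) + 1 from rfl, ascPochhammer_succ_eval, ascPochhammer_succ_eval]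
        push_cast
        ring
      calc (ascPochhammer ℂ (k + 1)).eval (a - u + 1) * (a - u)
          = (a - u) * (ascPochhammer ℂ (k + 1)).eval ((a - u) + 1) := by ring
        _ = (ascPochhammer ℂ k).eval (a - u) * ((a - u) + k) * ((a - u) + (k + 1)) := by
            rw [h1, h2]
    unfold gcoeff
    rw [ascPochhammer_succ_eval (k := a + u), ascPochhammer_succ_eval (k := a - u),
      ascPochhammer_succ_eval (k := c),
      asc_succ_left_eval (a + u - 1) k, show a + u - 1 + 1 = a + u from by ring,
      hq1, Nat.factorial_succ]
    push_cast
    linear_combination key_alg ((ascPochhammer ℂ k).eval (a + u)) ((ascPochhammer ℂ k).eval (a - u))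
      ((ascPochhammer ℂ k).eval c) ((k.factorial : ℂ)) ((k : ℂ)) a c u hC hck hfac hk1 hu' hau

theorem main (a c u : ℂ) (hc : ∀ n : ℕ, c ≠ -(n : ℂ)) (hu : u ≠ 1/2)
    (δ : ℂ) (hδ : δ = (1/2) * (a - c + 1/2) * (a - 1/2)) :
    ∀ x : ℂ, ‖x‖ < 1 →
      x * (1 - x) * deriv (fun y => gauss2F1 (a + u) (a - u) c y) x
        + ((1/2 - a) * x + (1/2) * c - 1/2 + (u - 1/2) * (x - 1/2) + δ / (u - 1/2))
          * gauss2F1 (a + u) (a - u) c x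
      = ((a - u) * (a - c + u) / (2 * (u - 1/2))) * gauss2F1 (a + u - 1) (a - u + 1) c x := by
  intro x hx
  have hx' : ‖x‖ < 1 := hx
  have hu' : u - 1/2 ≠ 0 := sub_ne_zero.mpr hu
  set A : ℕ → ℂ := gcoeff (a + u) (a - u) c with hA
  set B : ℕ → ℂ := gcoeff (a + u - 1) (a - u + 1) c with hB
  set E : ℂ := (1/2) * c - 1/2 - (u - 1/2) * (1/2) + δ / (u - 1/2) with hE
  set R : ℂ := (a - u) * (a - c + u) / (2 * (u - 1/2)) with hR
  -- derivative
  have hD : HasDerivAt (fun y => gauss2F1 (a + u) (a - u) c y)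
      (∑' k : ℕ, A k * ((k : ℂ) * x ^ (k - 1))) x := hasDerivAt_gauss (a + u) (a - u) c hx'
  set D : ℂ := ∑' k : ℕ, A k * ((k : ℂ) * x ^ (k - 1)) with hDdef
  have hderiv : deriv (fun y => gauss2F1 (a + u) (a - u) c y) x = D := hD.deriv
  have hDsum : HasSum (fun k : ℕ => A k * ((k : ℂ) * x ^ (k - 1))) D :=
    (summable_deriv_series (a + u) (a - u) c hx').hasSum
  set F : ℂ := gauss2F1 (a + u) (a - u) c x with hF
  have hFsum : HasSum (fun k : ℕ => A k * x ^ k) F :=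
    (summable_series (a + u) (a - u) c hx').hasSum
  set F' : ℂ := gauss2F1 (a + u - 1) (a - u + 1) c x with hF'
  have hF'sum : HasSum (fun k : ℕ => B k * x ^ k) F' :=
    (summable_series (a + u - 1) (a - u + 1) c hx').hasSum
  -- x * D
  have hxD : HasSum (fun k : ℕ => (k : ℂ) * A k * x ^ k) (x * D) := by
    have h := hDsum.mul_left x
    refine h.congr_fun fun k => ?_
    cases k with
    | zero => simp
    | succ j =>
      rw [show (j + 1 : ℕ) - 1 = j from rfl, pow_succ]
      push_cast
      ring
  -- E * F
  have hEF : HasSum (fun k : ℕ => E * (A k * x ^ k)) (E * F) := hFsum.mul_left E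
  -- (u - a) * F - x * D
  have hS : HasSum (fun k : ℕ => ((u - a) - k) * A k * x ^ k) ((u - a) * F - x * D) := by
    refine ((hFsum.mul_left (u - a)).sub hxD).congr_fun fun k => ?_
    ring
  -- shifted
  set G : ℕ → ℂ := fun k => Nat.casesOn k (0 : ℂ) (fun j => ((u - a) - j) * A j * x ^ (j + 1))
    with hG
  have hGsum : HasSum G (x * ((u - a) * F - x * D)) := by
    have h := hS.mul_left x
    have h2 : HasSum (fun n : ℕ => G (n + 1)) (x * ((u - a) * F - x * D)) := by
      refine h.congr_fun fun k => ?_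
      show ((u - a) - (k : ℂ)) * A k * x ^ (k + 1) = x * (((u - a) - k) * A k * x ^ k)
      ring
    have h3 := (hasSum_nat_add_iff (f := G) 1).mp h2
    simpa [hG] using h3
  have Hlhs : HasSum (fun k : ℕ => (k : ℂ) * A k * x ^ k + E * (A k * x ^ k) + G k)
      (x * D + E * F + x * ((u - a) * F - x * D)) := (hxD.add hEF).add hGsum
  have Hrhs : HasSum (fun k : ℕ => R * (B k * x ^ k)) (R * F') := hF'sum.mul_left R
  -- base case: E = R
  have hbase : E = R := by
    have h2 : (2 : ℂ) * (u - 1/2) ≠ 0 := mul_ne_zero two_ne_zero hu'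
    rw [hE, hR, hδ, eq_div_iff h2]
    linear_combination 2 * (div_mul_cancel₀ (1/2 * (a - c + 1/2) * (a - 1/2)) hu')
  have hfun : ∀ k : ℕ, (k : ℂ) * A k * x ^ k + E * (A k * x ^ k) + G k
      = R * (B k * x ^ k) := by
    intro k
    cases k with
    | zero =>
      have hA0 : A 0 = 1 := by simp [hA, gcoeff]
      have hB0 : B 0 = 1 := by simp [hB, gcoeff]
      rw [show G 0 = 0 from rfl, hA0, hB0, hbase]
      push_cast
      ring
    | succ j =>
      have hkey := key a c u δ hc hu' hδ j
      rw [show G (j + 1) = ((u - a) - (j : ℂ)) * A j * x ^ (j + 1) from rfl, hA, hB, hE, hR]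
      push_cast
      linear_combination (x ^ (j + 1)) * hkey
  have Hlhs' : HasSum (fun k : ℕ => R * (B k * x ^ k))
      (x * D + E * F + x * ((u - a) * F - x * D)) := by
    refine Hlhs.congr_fun fun k => (hfun k).symm
  have hval : x * D + E * F + x * ((u - a) * F - x * D) = R * F' := Hlhs'.unique Hrhs
  rw [hderiv]
  calc x * (1 - x) * D
        + ((1/2 - a) * x + (1/2) * c - 1/2 + (u - 1/2) * (x - 1/2) + δ / (u - 1/2)) * F
      = x * D + E * F + x * ((u - a) * F - x * D) := by rw [hE]; ring
    _ = R * F' := hval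
    _ = (a - u) * (a - c + u) / (2 * (u - 1/2)) * F' := by rw [hR]

end Gauss16

theorem stmt_16 (a c u : ℂ) (hc : ∀ n : ℕ, c ≠ -(n : ℂ)) (hu : u ≠ 1/2)
    (δ : ℂ) (hδ : δ = (1/2) * (a - c + 1/2) * (a - 1/2)) :
    ∀ x : ℂ, ‖x‖ < 1 →
      x * (1 - x) * deriv (fun y => gauss2F1 (a + u) (a - u) c y) x
        + ((1/2 - a) * x + (1/2) * c - 1/2 + (u - 1/2) * (x - 1/2) + δ / (u - 1/2))
          * gauss2F1 (a + u) (a - u) c x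
      = ((a - u) * (a - c + u) / (2 * (u - 1/2))) * gauss2F1 (a + u - 1) (a - u + 1) c x :=
  Gauss16.main a c u hc hu δ hδ
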